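/- Let T be a thick tree with loops with sink s. The map φ : ℤ^{V₀} → ∏_{j ∈ V₀} ℤ/e_{j,p(j)}ℤ given by φ(u)_j = ∑_{i ⪰ j} u_i (mod e_{j,p(j)}) is a surjective group homomorphism with kernel Λ, hence descends to an isomorphism ℤ^{V₀}/Λ ≅ ∏_{j ∈ V₀} ℤ/e_{j,p(j)}ℤ; moreover for every c ∈ ℕ^{V₀} one has φ(c) = φ(σ(c + e^T)), where e^T is the identity of the sandpile group G. -/

import Mathlib

namespace SandpilePaper

variable {V : Type*} [Fintype V] [DecidableEq V]

/-- Configurations: assignments of numbers of grains to ordinary (non-sink) vertices. -/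
abbrev Conf (s : V) : Type _ := {i : V // i ≠ s} → ℕ

/-- The degree of a vertex: `deg i = ∑ j, e i j`. -/
def deg (e : V → V → ℕ) (i : V) : ℕ := ∑ j, e i j

/-- Toppling the (unstable) vertex `i`. -/
def toppleAt (e : V → V → ℕ) (s : V) (i : {i : V // i ≠ s}) (u : Conf s) : Conf s :=
  fun j => if j = i then u i - deg e i.1 + e i.1 i.1 else u j + e i.1 j.1

/-- One toppling step: some unstable vertex topples. -/
def Topple (e : V → V → ℕ) (s : V) (u v : Conf s) : Prop :=
  ∃ i : {i : V // i ≠ s}, deg e i.1 ≤ u i ∧ v = toppleAt e s i u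

/-- A configuration is stable if every ordinary vertex has fewer grains than its degree. -/
def Stable (e : V → V → ℕ) (s : V) (u : Conf s) : Prop :=
  ∀ j : {i : V // i ≠ s}, u j < deg e j.1

/-- The underlying simple graph: edges between distinct vertices with positive multiplicity. -/
def graph (e : V → V → ℕ) : SimpleGraph V := SimpleGraph.fromRel fun i j => 0 < e i j

/-- `σ` is a stabilization map: `σ u` is stable and reached from `u` by finitely many topplings. -/
def IsStabilization (e : V → V → ℕ) (s : V) (σ : Conf s → Conf s) : Prop :=
  ∀ u, Stable e s (σ u) ∧ Relation.ReflTransGen (Topple e s) u (σ u)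

/-- A stable configuration `u` is recurrent if every configuration can reach it. -/
def Recurrent (e : V → V → ℕ) (s : V) (σ : Conf s → Conf s) (u : Conf s) : Prop :=
  Stable e s u ∧ ∀ v : Conf s, ∃ w : Conf s, σ (v + w) = u

/-- Apply a sequence of topplings. -/
def applySeq (e : V → V → ℕ) (s : V) (u : Conf s) : List {i : V // i ≠ s} → Conf s
  | [] => u
  | i :: L => applySeq e s (toppleAt e s i u) L

/-- A toppling sequence is valid if each toppled vertex is unstable when toppled. -/
def ValidSeq (e : V → V → ℕ) (s : V) (u : Conf s) : List {i : V // i ≠ s} → Prop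
  | [] => True
  | i :: L => deg e i.1 ≤ u i ∧ ValidSeq e s (toppleAt e s i u) L

/-- `succeq e s i j` means `i ⪰ j`: `j` lies on the unique path from `i` to the sink `s`. -/
def succeq (e : V → V → ℕ) (s i j : V) : Prop :=
  (graph e).dist i s = (graph e).dist i j + (graph e).dist j s

noncomputable instance (e : V → V → ℕ) (s i j : V) : Decidable (succeq e s i j) := Nat.decEq _ _

/-- `p` assigns to each ordinary vertex its parent: its neighbor on the path to the sink. -/
def IsParent (e : V → V → ℕ) (s : V) (p : {i : V // i ≠ s} → V) : Prop :=
  ∀ j : {i : V // i ≠ s}, (graph e).Adj j.1 (p j) ∧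
    (graph e).dist (p j) s + 1 = (graph e).dist j.1 s

/-- The set `{i : i ⪰ j}`. -/
noncomputable def descendants (e : V → V → ℕ) (s : V) (j : {i : V // i ≠ s}) :
    Finset {i : V // i ≠ s} :=
  Finset.univ.filter fun i => succeq e s i.1 j.1

/-- The set `{i : i ≻ j}`. -/
noncomputable def strictDescendants (e : V → V → ℕ) (s : V) (j : {i : V // i ≠ s}) :
    Finset {i : V // i ≠ s} :=
  Finset.univ.filter fun i => i ≠ j ∧ succeq e s i.1 j.1

/-- `j` is a leaf: its parent is its only neighbor in the underlying tree. -/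
def IsLeaf (e : V → V → ℕ) (s : V) (p : {i : V // i ≠ s} → V) (j : {i : V // i ≠ s}) : Prop :=
  ∀ k : V, (graph e).Adj j.1 k → k = p j

/-- Rows of the toppling matrix `Δ`. -/
def deltaRow (e : V → V → ℕ) (s : V) (i j : {i : V // i ≠ s}) : ℤ :=
  if i = j then (deg e i.1 : ℤ) - (e i.1 i.1 : ℤ) else -(e i.1 j.1 : ℤ)

/-- The lattice `Λ` spanned by the rows of the toppling matrix. -/
def lattice (e : V → V → ℕ) (s : V) : AddSubgroup ({i : V // i ≠ s} → ℤ) :=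
  AddSubgroup.closure (Set.range (deltaRow e s))

/-- The map `φ(u)_j = ∑_{i ⪰ j} u_i (mod e_{j,p(j)})`. -/
noncomputable def phi (e : V → V → ℕ) (s : V) (p : {i : V // i ≠ s} → V) (u : Conf s)
    (j : {i : V // i ≠ s}) : ZMod (e j.1 (p j)) :=
  ∑ i ∈ descendants e s j, (u i : ZMod (e j.1 (p j)))

/-- The map `φ` on integer vectors. -/
noncomputable def phiZ (e : V → V → ℕ) (s : V) (p : {i : V // i ≠ s} → V) (u : {i : V // i ≠ s} → ℤ)
    (j : {i : V // i ≠ s}) : ZMod (e j.1 (p j)) :=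
  ∑ i ∈ descendants e s j, (u i : ZMod (e j.1 (p j)))


section Aux

variable {e : V → V → ℕ} {s : V}
set_option linter.unusedSectionVars false

lemma adj_iff (hsym : ∀ i j, e i j = e j i) {x y : V} :
    (graph e).Adj x y ↔ x ≠ y ∧ 0 < e x y := by
  rw [graph, SimpleGraph.fromRel_adj, hsym y x]
  tauto

lemma succeq_refl (j : V) : succeq e s j j := by
  simp [succeq, SimpleGraph.dist_self]

lemma dist_getVert_le (hconn : (graph e).Connected) {a b : V} (w : (graph e).Walk a b)
    (m k : ℕ) : (graph e).dist (w.getVert m) (w.getVert (m + k)) ≤ k := by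
  induction k with
  | zero => simp [SimpleGraph.dist_self]
  | succ k ih =>
    have h1 : (graph e).dist (w.getVert (m+k)) (w.getVert (m+k+1)) ≤ 1 := by
      by_cases h : m + k < w.length
      · exact le_of_eq (SimpleGraph.dist_eq_one_iff_adj.mpr (w.adj_getVert_succ h))
      · rw [w.getVert_of_length_le (le_of_not_gt h), w.getVert_of_length_le (by omega)]
        simp [SimpleGraph.dist_self]
    have h2 := hconn.dist_triangle (u := w.getVert m) (v := w.getVert (m+k)) (w := w.getVert (m+k+1))
    show (graph e).dist (w.getVert m) (w.getVert (m+k+1)) ≤ k+1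
    omega

lemma geod_dist (hconn : (graph e).Connected) {a b : V} (w : (graph e).Walk a b)
    (hw : w.length = (graph e).dist a b) {n : ℕ} (hn : n ≤ w.length) :
    (graph e).dist a (w.getVert n) = n ∧ (graph e).dist (w.getVert n) b = w.length - n := by
  have h1 : (graph e).dist a (w.getVert n) ≤ n := by
    have := dist_getVert_le hconn w 0 n
    simpa [w.getVert_zero] using this
  have h2 : (graph e).dist (w.getVert n) b ≤ w.length - n := by
    have := dist_getVert_le hconn w n (w.length - n)
    rwa [show n + (w.length - n) = w.length by omega, w.getVert_length] at this
  have h3 := hconn.dist_triangle (u := a) (v := w.getVert n) (w := b)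
  omega

lemma unique_down (ht : (graph e).IsTree) {a b c : V} (hab : (graph e).Adj a b)
    (hac : (graph e).Adj a c)
    (hb : (graph e).dist b s + 1 = (graph e).dist a s)
    (hc : (graph e).dist c s + 1 = (graph e).dist a s) : b = c := by
  have hconn := ht.isConnected
  obtain ⟨Pb, PbPath, Pblen⟩ := hconn.exists_path_of_dist b s
  obtain ⟨Pc, PcPath, Pclen⟩ := hconn.exists_path_of_dist c s
  have hbp : (SimpleGraph.Walk.cons hab Pb).IsPath := by
    rw [SimpleGraph.Walk.cons_isPath_iff]
    refine ⟨PbPath, fun hmem => ?_⟩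
    have h4 : (graph e).dist a s ≤ (Pb.dropUntil a hmem).length := SimpleGraph.dist_le _
    have h5 : (Pb.takeUntil a hmem).length + (Pb.dropUntil a hmem).length = Pb.length := by
      rw [← SimpleGraph.Walk.length_append, SimpleGraph.Walk.take_spec]
    omega
  have hcp : (SimpleGraph.Walk.cons hac Pc).IsPath := by
    rw [SimpleGraph.Walk.cons_isPath_iff]
    refine ⟨PcPath, fun hmem => ?_⟩
    have h4 : (graph e).dist a s ≤ (Pc.dropUntil a hmem).length := SimpleGraph.dist_le _
    have h5 : (Pc.takeUntil a hmem).length + (Pc.dropUntil a hmem).length = Pc.length := by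
      rw [← SimpleGraph.Walk.length_append, SimpleGraph.Walk.take_spec]
    omega
  have heq := (ht.existsUnique_path a s).unique hbp hcp
  have : (SimpleGraph.Walk.cons hab Pb).getVert 1 = (SimpleGraph.Walk.cons hac Pc).getVert 1 := by
    rw [heq]
  simpa [SimpleGraph.Walk.getVert_cons_succ, SimpleGraph.Walk.getVert_zero] using this

lemma adj_dist_ne (ht : (graph e).IsTree) {a b : V} (hab : (graph e).Adj a b) :
    (graph e).dist a s ≠ (graph e).dist b s := by
  intro hEq
  have hconn := ht.isConnected
  obtain ⟨Pa, PaPath, Palen⟩ := hconn.exists_path_of_dist a s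
  obtain ⟨Pb, PbPath, Pblen⟩ := hconn.exists_path_of_dist b s
  have hnotmem : a ∉ Pb.support := by
    intro hmem
    have h4 : (graph e).dist a s ≤ (Pb.dropUntil a hmem).length := SimpleGraph.dist_le _
    have h5 : (Pb.takeUntil a hmem).length + (Pb.dropUntil a hmem).length = Pb.length := by
      rw [← SimpleGraph.Walk.length_append, SimpleGraph.Walk.take_spec]
    have h6 : (Pb.takeUntil a hmem).length ≠ 0 := fun h0 =>
      hab.ne (SimpleGraph.Walk.eq_of_length_eq_zero h0).symm
    omega
  have hcons : (SimpleGraph.Walk.cons hab Pb).IsPath :=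
    (SimpleGraph.Walk.cons_isPath_iff _ _).mpr ⟨PbPath, hnotmem⟩
  have heq := (ht.existsUnique_path a s).unique PaPath hcons
  have := congrArg SimpleGraph.Walk.length heq
  rw [SimpleGraph.Walk.length_cons] at this
  omega

lemma succeq_trans (hconn : (graph e).Connected) {i j k : V} (h1 : succeq e s i j)
    (h2 : succeq e s j k) : succeq e s i k := by
  unfold succeq at *
  have t1 := hconn.dist_triangle (u := i) (v := j) (w := k)
  have t2 := hconn.dist_triangle (u := i) (v := k) (w := s)
  omega

lemma succeq_antisymm (hconn : (graph e).Connected) {i j : V} (h1 : succeq e s i j)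
    (h2 : succeq e s j i) : i = j := by
  unfold succeq at *
  rw [SimpleGraph.dist_comm (u := j) (v := i)] at h2
  exact (hconn.dist_eq_zero_iff).mp (by omega)

lemma succeq_dist_le {i j : V} (h : succeq e s i j) :
    (graph e).dist j s ≤ (graph e).dist i s := by
  unfold succeq at h; omega

lemma not_succeq_parent (hconn : (graph e).Connected) {p : {i : V // i ≠ s} → V}
    (hp : IsParent e s p) (j : {i : V // i ≠ s}) : ¬ succeq e s (p j) j.1 := by
  intro h
  have h1 := succeq_dist_le h
  have h2 := (hp j).2
  omega

lemma adj_cases (hsym : ∀ i j, e i j = e j i) (ht : (graph e).IsTree)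
    {p : {i : V // i ≠ s} → V} (hp : IsParent e s p) (i : {i : V // i ≠ s}) {k : V}
    (h : (graph e).Adj i.1 k) : k = p i ∨ ∃ hk : k ≠ s, p ⟨k, hk⟩ = i.1 := by
  have hconn := ht.isConnected
  have hd1 : (graph e).dist i.1 k = 1 := SimpleGraph.dist_eq_one_iff_adj.mpr h
  have hd2 : (graph e).dist k i.1 = 1 := SimpleGraph.dist_eq_one_iff_adj.mpr h.symm
  have hne := adj_dist_ne (s := s) ht h
  have tri1 := hconn.dist_triangle (u := i.1) (v := k) (w := s)
  have tri2 := hconn.dist_triangle (u := k) (v := i.1) (w := s)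
  rcases lt_or_gt_of_ne hne with hlt | hgt
  · -- dist i s < dist k s, so i is the parent of k
    have hk : k ≠ s := by
      intro hks
      subst hks
      rw [SimpleGraph.dist_self] at hlt; omega
    right
    refine ⟨hk, ?_⟩
    exact unique_down ht (hp ⟨k, hk⟩).1 h.symm (hp ⟨k, hk⟩).2 (by show (graph e).dist (↑i) s + 1 = (graph e).dist k s; omega)
  · left
    exact unique_down ht h (hp i).1 (by omega) (hp i).2

lemma succeq_of_parent_succeq (hconn : (graph e).Connected) {p : {i : V // i ≠ s} → V}
    (hp : IsParent e s p) (i : {i : V // i ≠ s}) {j : V} (h : succeq e s (p i) j) :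
    succeq e s i.1 j := by
  unfold succeq at *
  have h1 := (hp i).2
  have h2 := hconn.dist_triangle (u := i.1) (v := p i) (w := j)
  have h3 : (graph e).dist i.1 (p i) = 1 := SimpleGraph.dist_eq_one_iff_adj.mpr (hp i).1
  have h4 := hconn.dist_triangle (u := i.1) (v := j) (w := s)
  omega

lemma parent_succeq (ht : (graph e).IsTree) {p : {i : V // i ≠ s} → V}
    (hp : IsParent e s p) (i : {i : V // i ≠ s}) {j : V} (hij : succeq e s i.1 j)
    (hne : i.1 ≠ j) : succeq e s (p i) j := by
  have hconn := ht.isConnected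
  obtain ⟨w1, hw1⟩ := hconn.exists_walk_length_eq_dist i.1 j
  obtain ⟨w2, hw2⟩ := hconn.exists_walk_length_eq_dist j s
  set w := w1.append w2 with hwdef
  have hwl : w.length = w1.length + w2.length := SimpleGraph.Walk.length_append _ _
  have hw : w.length = (graph e).dist i.1 s := by
    rw [hwl, hw1, hw2, hij]
  have hd1 : 0 < (graph e).dist i.1 j := hconn.pos_dist_of_ne hne
  have hpos : 0 < w.length := by omega
  have hadj : (graph e).Adj i.1 (w.getVert 1) := by
    have := w.adj_getVert_succ (by omega : 0 < w.length)
    simpa [w.getVert_zero] using this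
  have hgd := geod_dist hconn w hw (n := 1) hpos
  have hb : w.getVert 1 = p i := by
    refine unique_down ht hadj (hp i).1 ?_ (hp i).2
    omega
  have hj : w.getVert w1.length = j := by
    rw [SimpleGraph.Walk.getVert_append]
    simp [w2.getVert_zero]
  have h5 : (graph e).dist (w.getVert 1) j ≤ w1.length - 1 := by
    have := dist_getVert_le hconn w 1 (w1.length - 1)
    rwa [show 1 + (w1.length - 1) = w1.length by omega, hj] at this
  have h6 := hconn.dist_triangle (u := w.getVert 1) (v := j) (w := s)
  rw [← hb]
  unfold succeq
  omega

noncomputable def descMap (e : V → V → ℕ) (s : V) (j : {i : V // i ≠ s}) : Finset V :=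
  (descendants e s j).map ⟨Subtype.val, Subtype.val_injective⟩

lemma mem_descMap {j : {i : V // i ≠ s}} {k : V} :
    k ∈ descMap e s j ↔ ∃ hk : k ≠ s, succeq e s k j.1 := by
  simp [descMap, descendants, Subtype.exists]
  tauto

lemma mem_descendants {i j : {i : V // i ≠ s}} :
    i ∈ descendants e s j ↔ succeq e s i.1 j.1 := by
  simp [descendants]

lemma sum_desc {M : Type*} [AddCommMonoid M] (j : {i : V // i ≠ s}) (f : V → M) :
    ∑ k ∈ descendants e s j, f k.1 = ∑ k ∈ descMap e s j, f k := by
  rw [descMap, Finset.sum_map]; rfl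

lemma sum_e_self (hsym : ∀ i j, e i j = e j i) (ht : (graph e).IsTree)
    {p : {i : V // i ≠ s} → V} (hp : IsParent e s p) (j : {i : V // i ≠ s}) :
    e j.1 (p j) + ∑ k ∈ descMap e s j, e j.1 k = deg e j.1 := by
  have hconn := ht.isConnected
  have hpj : p j ∉ descMap e s j := by
    rw [mem_descMap]; rintro ⟨hps, hsucc⟩; exact not_succeq_parent hconn hp j hsucc
  rw [← Finset.sum_insert hpj]
  refine Finset.sum_subset (Finset.subset_univ _) ?_
  intro k _ hk
  by_contra h0
  have hpos : 0 < e j.1 k := Nat.pos_of_ne_zero h0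
  rw [Finset.mem_insert, mem_descMap] at hk
  push_neg at hk
  obtain ⟨hk1, hk2⟩ := hk
  have hkj : k ≠ j.1 := by
    rintro rfl; exact hk2 j.2 (succeq_refl _)
  have hadj : (graph e).Adj j.1 k := (adj_iff hsym).mpr ⟨Ne.symm hkj, hpos⟩
  rcases adj_cases hsym ht hp j hadj with h | ⟨hk', hpk⟩
  · exact hk1 h
  · exact hk2 hk' (succeq_of_parent_succeq hconn hp ⟨k, hk'⟩ (by rw [hpk]; exact succeq_refl _))

lemma sum_e_strict (hsym : ∀ i j, e i j = e j i) (ht : (graph e).IsTree)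
    {p : {i : V // i ≠ s} → V} (hp : IsParent e s p) (i j : {i : V // i ≠ s})
    (hij : succeq e s i.1 j.1) (hne : i.1 ≠ j.1) :
    ∑ k ∈ descMap e s j, e i.1 k = deg e i.1 := by
  have hconn := ht.isConnected
  refine Finset.sum_subset (Finset.subset_univ _) ?_
  intro k _ hk
  by_contra h0
  have hpos : 0 < e i.1 k := Nat.pos_of_ne_zero h0
  rw [mem_descMap] at hk
  push_neg at hk
  have hki : k ≠ i.1 := by
    rintro rfl; exact hk i.2 hij
  have hadj : (graph e).Adj i.1 k := (adj_iff hsym).mpr ⟨Ne.symm hki, hpos⟩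
  have hps : succeq e s (p i) j.1 := parent_succeq ht hp i hij hne
  rcases adj_cases hsym ht hp i hadj with h | ⟨hk', hpk⟩
  · -- k = p i
    have hpis : p i ≠ s := by
      intro h0'
      have h1 := succeq_dist_le hps
      have h2 : 0 < (graph e).dist j.1 s := hconn.pos_dist_of_ne j.2
      rw [h0', SimpleGraph.dist_self] at h1
      omega
    exact hk (h ▸ hpis) (h ▸ hps)
  · exact hk hk' (succeq_of_parent_succeq hconn hp ⟨k, hk'⟩ (by rw [hpk]; exact hij))

lemma sum_e_notdesc (hsym : ∀ i j, e i j = e j i) (ht : (graph e).IsTree)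
    {p : {i : V // i ≠ s} → V} (hp : IsParent e s p) (i j : {i : V // i ≠ s})
    (hni : ¬ succeq e s i.1 j.1) :
    ∑ k ∈ descMap e s j, e i.1 k = if i.1 = p j then e i.1 j.1 else 0 := by
  have hconn := ht.isConnected
  have key : ∀ k ∈ descMap e s j, k ≠ j.1 → e i.1 k = 0 := by
    intro k hk hkj
    by_contra h0
    have hpos : 0 < e i.1 k := Nat.pos_of_ne_zero h0
    rw [mem_descMap] at hk
    obtain ⟨hks, hsk⟩ := hk
    have hki : k ≠ i.1 := by rintro rfl; exact hni hsk
    have hadj : (graph e).Adj i.1 k := (adj_iff hsym).mpr ⟨Ne.symm hki, hpos⟩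
    rcases adj_cases hsym ht hp i hadj with h | ⟨hk', hpk⟩
    · exact hni (succeq_of_parent_succeq hconn hp i (h ▸ hsk))
    · have := parent_succeq ht hp ⟨k, hk'⟩ hsk hkj
      rw [hpk] at this
      exact hni this
  split_ifs with hpi
  · refine Finset.sum_eq_single_of_mem j.1 (mem_descMap.mpr ⟨j.2, succeq_refl _⟩) ?_
    intro k hk hkj
    exact key k hk hkj
  · refine Finset.sum_eq_zero ?_
    intro k hk
    rcases eq_or_ne k j.1 with hkj | hkj
    · -- k = j.1 : show e i j = 0
      by_contra h0
      have hpos : 0 < e i.1 k := Nat.pos_of_ne_zero h0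
      have hki : k ≠ i.1 := by
        intro hik; exact hni (by rw [← hik, hkj]; exact succeq_refl _)
      have hadj : (graph e).Adj i.1 k := (adj_iff hsym).mpr ⟨Ne.symm hki, hpos⟩
      rcases adj_cases hsym ht hp i hadj with h | ⟨hk', hpk⟩
      · exact hni (succeq_of_parent_succeq hconn hp i (by rw [← h, hkj]; exact succeq_refl _))
      · apply hpi
        rw [← hpk]
        congr 1
        exact Subtype.ext hkj
    · exact key k hk hkj

lemma rowSum_eq (i j : {i : V // i ≠ s}) :
    ∑ k ∈ descendants e s j, deltaRow e s i k
      = (if succeq e s i.1 j.1 then (deg e i.1 : ℤ) else 0)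
        - ∑ k ∈ descMap e s j, (e i.1 k : ℤ) := by
  have hcongr : ∀ k ∈ descendants e s j,
      deltaRow e s i k = (if i = k then (deg e i.1 : ℤ) else 0) - (e i.1 k.1 : ℤ) := by
    intro k _
    unfold deltaRow
    split_ifs with h
    · subst h; ring
    · ring
  rw [Finset.sum_congr rfl hcongr, Finset.sum_sub_distrib]
  congr 1
  · rw [Finset.sum_ite_eq]
    by_cases h : i ∈ descendants e s j
    · rw [if_pos h, if_pos (mem_descendants.mp h)]
    · rw [if_neg h, if_neg (fun hs => h (mem_descendants.mpr hs))]
  · exact sum_desc j (fun k => (e i.1 k : ℤ))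

lemma rowSum_self (hsym : ∀ i j, e i j = e j i) (ht : (graph e).IsTree)
    {p : {i : V // i ≠ s} → V} (hp : IsParent e s p) (j : {i : V // i ≠ s}) :
    ∑ k ∈ descendants e s j, deltaRow e s j k = (e j.1 (p j) : ℤ) := by
  rw [rowSum_eq, if_pos (succeq_refl _)]
  have h := sum_e_self hsym ht hp j
  have hcast : ∑ k ∈ descMap e s j, (e j.1 k : ℤ) = ((∑ k ∈ descMap e s j, e j.1 k : ℕ) : ℤ) := by
    push_cast; rfl
  rw [hcast]
  omega

lemma rowSum_parent (hsym : ∀ i j, e i j = e j i) (ht : (graph e).IsTree)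
    {p : {i : V // i ≠ s} → V} (hp : IsParent e s p) (i j : {i : V // i ≠ s})
    (hpi : i.1 = p j) :
    ∑ k ∈ descendants e s j, deltaRow e s i k = -(e j.1 (p j) : ℤ) := by
  have hni : ¬ succeq e s i.1 j.1 := by
    rw [hpi]
    exact not_succeq_parent ht.isConnected hp j
  rw [rowSum_eq, if_neg hni]
  have h := sum_e_notdesc hsym ht hp i j hni
  rw [if_pos hpi] at h
  have hcast : ∑ k ∈ descMap e s j, (e i.1 k : ℤ) = ((∑ k ∈ descMap e s j, e i.1 k : ℕ) : ℤ) := by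
    push_cast; rfl
  rw [hcast, h, hpi, hsym (p j) j.1]
  ring

lemma rowSum_other (hsym : ∀ i j, e i j = e j i) (ht : (graph e).IsTree)
    {p : {i : V // i ≠ s} → V} (hp : IsParent e s p) (i j : {i : V // i ≠ s})
    (h1 : i ≠ j) (h2 : i.1 ≠ p j) :
    ∑ k ∈ descendants e s j, deltaRow e s i k = 0 := by
  have h1' : i.1 ≠ j.1 := fun h => h1 (Subtype.ext h)
  by_cases hs : succeq e s i.1 j.1
  · rw [rowSum_eq, if_pos hs]
    have h := sum_e_strict hsym ht hp i j hs h1'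
    have hcast : ∑ k ∈ descMap e s j, (e i.1 k : ℤ) = ((∑ k ∈ descMap e s j, e i.1 k : ℕ) : ℤ) := by
      push_cast; rfl
    rw [hcast, h]
    ring
  · rw [rowSum_eq, if_neg hs]
    have h := sum_e_notdesc hsym ht hp i j hs
    rw [if_neg h2] at h
    have hcast : ∑ k ∈ descMap e s j, (e i.1 k : ℤ) = ((∑ k ∈ descMap e s j, e i.1 k : ℕ) : ℤ) := by
      push_cast; rfl
    rw [hcast, h]
    ring

lemma rowSum_zmod (hsym : ∀ i j, e i j = e j i) (ht : (graph e).IsTree)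
    {p : {i : V // i ≠ s} → V} (hp : IsParent e s p) (i j : {i : V // i ≠ s}) :
    ((∑ k ∈ descendants e s j, deltaRow e s i k : ℤ) : ZMod (e j.1 (p j))) = 0 := by
  rcases eq_or_ne i j with rfl | hij
  · rw [rowSum_self hsym ht hp]
    simp [ZMod.natCast_self]
  · rcases eq_or_ne i.1 (p j) with hpi | hpi
    · rw [rowSum_parent hsym ht hp i j hpi]
      push_cast
      simp [ZMod.natCast_self]
    · rw [rowSum_other hsym ht hp i j hij hpi]
      simp

lemma mem_strictDescendants {i j : {i : V // i ≠ s}} :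
    i ∈ strictDescendants e s j ↔ i ≠ j ∧ succeq e s i.1 j.1 := by
  simp [strictDescendants]

lemma descendants_eq_insert (j : {i : V // i ≠ s}) :
    descendants e s j = insert j (strictDescendants e s j) := by
  ext i
  rw [Finset.mem_insert, mem_descendants, mem_strictDescendants]
  constructor
  · intro h
    rcases eq_or_ne i j with h' | h'
    · exact Or.inl h'
    · exact Or.inr ⟨h', h⟩
  · rintro (rfl | ⟨_, h⟩)
    · exact succeq_refl _
    · exact h

lemma not_mem_strictDescendants (j : {i : V // i ≠ s}) : j ∉ strictDescendants e s j := by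
  rw [mem_strictDescendants]
  tauto

lemma card_strict_lt (j : {i : V // i ≠ s}) :
    (strictDescendants e s j).card < (descendants e s j).card := by
  rw [descendants_eq_insert, Finset.card_insert_of_notMem (not_mem_strictDescendants j)]
  omega

lemma descendants_subset_strict (hconn : (graph e).Connected) {i j : {i : V // i ≠ s}}
    (hi : i ∈ strictDescendants e s j) :
    descendants e s i ⊆ strictDescendants e s j := by
  rw [mem_strictDescendants] at hi
  intro k hk
  rw [mem_descendants] at hk
  rw [mem_strictDescendants]
  refine ⟨?_, succeq_trans hconn hk hi.2⟩
  rintro rfl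
  exact hi.1 (Subtype.ext (succeq_antisymm hconn hi.2 hk))

lemma card_desc_lt (hconn : (graph e).Connected) {i j : {i : V // i ≠ s}}
    (hi : i ∈ strictDescendants e s j) :
    (descendants e s i).card < (descendants e s j).card :=
  lt_of_le_of_lt (Finset.card_le_card (descendants_subset_strict hconn hi)) (card_strict_lt j)

end Aux

/-- Inverse of the summation-over-descendants transform. -/
noncomputable def pinv (e : V → V → ℕ) (s : V) (ht : (graph e).IsTree)
    (t : {i : V // i ≠ s} → ℤ) (j : {i : V // i ≠ s}) : ℤ :=
  t j - ∑ i ∈ (strictDescendants e s j).attach, pinv e s ht t i.1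
termination_by (descendants e s j).card
decreasing_by exact card_desc_lt ht.isConnected i.2

/-- Solves `c j = m j + c (p j)` downward from the sink. -/
noncomputable def cfun (e : V → V → ℕ) (s : V) (p : {i : V // i ≠ s} → V)
    (hp : IsParent e s p) (m : {i : V // i ≠ s} → ℤ) (j : {i : V // i ≠ s}) : ℤ :=
  m j + if h : p j = s then 0 else cfun e s p hp m ⟨p j, h⟩
termination_by (graph e).dist j.1 s
decreasing_by
  have := (hp j).2
  show (graph e).dist (p j) s < (graph e).dist j.1 s
  omega

section Aux2

variable {e : V → V → ℕ} {s : V}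
set_option linter.unusedSectionVars false

lemma psi_pinv (ht : (graph e).IsTree) (t : {i : V // i ≠ s} → ℤ) (j : {i : V // i ≠ s}) :
    ∑ i ∈ descendants e s j, pinv e s ht t i = t j := by
  rw [descendants_eq_insert, Finset.sum_insert (not_mem_strictDescendants j)]
  rw [pinv, Finset.sum_attach]
  ring

lemma psi_eq_zero (ht : (graph e).IsTree) {u : {i : V // i ≠ s} → ℤ}
    (h : ∀ j, ∑ i ∈ descendants e s j, u i = 0) : ∀ j, u j = 0 := by
  have H : ∀ n (j : {i : V // i ≠ s}), (descendants e s j).card ≤ n → u j = 0 := by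
    intro n
    induction n with
    | zero =>
      intro j hj
      exfalso
      have : j ∈ descendants e s j := mem_descendants.mpr (succeq_refl _)
      have := Finset.card_pos.mpr ⟨j, this⟩
      omega
    | succ n ih =>
      intro j hj
      have hsum := h j
      rw [descendants_eq_insert, Finset.sum_insert (not_mem_strictDescendants j)] at hsum
      have hz : ∑ i ∈ strictDescendants e s j, u i = 0 := by
        refine Finset.sum_eq_zero ?_
        intro i hi
        refine ih i ?_
        have := card_desc_lt ht.isConnected hi
        omega
      omega
  exact fun j => H _ j le_rfl

variable {p : {i : V // i ≠ s} → V}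

/-- `phiZ` as a bundled homomorphism. -/
noncomputable def phiHom (e : V → V → ℕ) (s : V) (p : {i : V // i ≠ s} → V) :
    ({i : V // i ≠ s} → ℤ) →+ (∀ j : {i : V // i ≠ s}, ZMod (e j.1 (p j))) where
  toFun := phiZ e s p
  map_zero' := by funext j; simp [phiZ]
  map_add' u v := by
    funext j
    simp [phiZ, Pi.add_apply, Int.cast_add, Finset.sum_add_distrib]

lemma phiZ_cast_sum (u : {i : V // i ≠ s} → ℤ) (j : {i : V // i ≠ s}) :
    phiZ e s p u j = ((∑ i ∈ descendants e s j, u i : ℤ) : ZMod (e j.1 (p j))) := by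
  rw [phiZ]; push_cast; rfl

lemma deltaRow_mem_lattice (i : {i : V // i ≠ s}) : deltaRow e s i ∈ lattice e s :=
  AddSubgroup.subset_closure (Set.mem_range_self i)

lemma lattice_le_ker (hsym : ∀ i j, e i j = e j i) (ht : (graph e).IsTree)
    (hp : IsParent e s p) {u : {i : V // i ≠ s} → ℤ} (hu : u ∈ lattice e s) :
    phiZ e s p u = 0 := by
  have hle : lattice e s ≤ (phiHom e s p).ker := by
    rw [lattice, AddSubgroup.closure_le]
    rintro w ⟨i, rfl⟩
    rw [SetLike.mem_coe, AddMonoidHom.mem_ker]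
    show phiZ e s p (deltaRow e s i) = 0
    funext j
    rw [phiZ_cast_sum, rowSum_zmod hsym ht hp]
    rfl
  have := hle hu
  rwa [AddMonoidHom.mem_ker] at this

lemma ker_le_lattice (hsym : ∀ i j, e i j = e j i) (ht : (graph e).IsTree)
    (hp : IsParent e s p) {u : {i : V // i ≠ s} → ℤ} (hu : phiZ e s p u = 0) :
    u ∈ lattice e s := by
  have hdvd : ∀ j : {i : V // i ≠ s}, ((e j.1 (p j) : ℤ)) ∣ ∑ i ∈ descendants e s j, u i := by
    intro j
    have h := congrFun hu j
    rw [phiZ_cast_sum] at h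
    exact (ZMod.intCast_zmod_eq_zero_iff_dvd _ _).mp h
  set m : {i : V // i ≠ s} → ℤ :=
    fun j => (∑ i ∈ descendants e s j, u i) / (e j.1 (p j) : ℤ) with hmdef
  have hm : ∀ j, (e j.1 (p j) : ℤ) * m j = ∑ i ∈ descendants e s j, u i :=
    fun j => Int.mul_ediv_cancel' (hdvd j)
  set c : {i : V // i ≠ s} → ℤ := cfun e s p hp m with hcdef
  set v : {i : V // i ≠ s} → ℤ := ∑ i : {i : V // i ≠ s}, c i • deltaRow e s i with hvdef
  have hv : v ∈ lattice e s :=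
    AddSubgroup.sum_mem _ (fun i _ => AddSubgroup.zsmul_mem _ (deltaRow_mem_lattice i) _)
  have hpsiv : ∀ j, ∑ k ∈ descendants e s j, v k = ∑ k ∈ descendants e s j, u k := by
    intro j
    have hswap : ∑ k ∈ descendants e s j, v k
        = ∑ i : {i : V // i ≠ s}, c i * (∑ k ∈ descendants e s j, deltaRow e s i k) := by
      simp only [hvdef, Finset.sum_apply, Pi.smul_apply, smul_eq_mul]
      rw [Finset.sum_comm]
      simp [Finset.mul_sum]
    rw [hswap, ← hm j]
    by_cases hps : p j = s
    · rw [Finset.sum_eq_single_of_mem j (Finset.mem_univ j)]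
      · rw [rowSum_self hsym ht hp]
        have hc : c j = m j := by
          rw [hcdef, cfun, dif_pos hps, add_zero]
        rw [hc]; ring
      · intro i _ hij
        rw [rowSum_other hsym ht hp i j hij (by rw [hps]; exact i.2), mul_zero]
    · set i0 : {i : V // i ≠ s} := ⟨p j, hps⟩ with hi0
      have hji0 : j ≠ i0 := by
        intro h
        exact (hp j).1.ne (congrArg Subtype.val h)
      have hsplit : ∑ i : {i : V // i ≠ s}, c i * (∑ k ∈ descendants e s j, deltaRow e s i k)
          = ∑ i ∈ ({j, i0} : Finset _), c i * (∑ k ∈ descendants e s j, deltaRow e s i k) := by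
        symm
        apply Finset.sum_subset (Finset.subset_univ _)
        intro i _ hi
        simp only [Finset.mem_insert, Finset.mem_singleton] at hi
        push_neg at hi
        rw [rowSum_other hsym ht hp i j hi.1 (fun hh => hi.2 (Subtype.ext hh)), mul_zero]
      rw [hsplit, Finset.sum_insert (by simp [hji0]), Finset.sum_singleton]
      rw [rowSum_self hsym ht hp, rowSum_parent hsym ht hp i0 j rfl]
      have hc : c j = m j + c i0 := by
        rw [hcdef, cfun, dif_neg hps]
      rw [hc]; ring
  have hz : ∀ j, ∑ k ∈ descendants e s j, (u - v) k = 0 := by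
    intro j
    simp only [Pi.sub_apply, Finset.sum_sub_distrib]
    rw [hpsiv j, sub_self]
  have huv : u = v := by
    funext j
    have := psi_eq_zero ht hz j
    rw [Pi.sub_apply] at this
    linarith
  rw [huv]; exact hv

lemma phiZ_surj (ht : (graph e).IsTree) : Function.Surjective (phiZ e s p) := by
  intro t
  refine ⟨pinv e s ht (fun j => (ZMod.cast (t j) : ℤ)), ?_⟩
  funext j
  rw [phiZ_cast_sum, psi_pinv]
  exact ZMod.intCast_zmod_cast _

lemma phiZ_natCast (c : Conf s) :
    phiZ e s p (fun i => (c i : ℤ)) = phi e s p c := by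
  funext j
  rw [phiZ, phi]
  push_cast
  rfl

lemma phi_add (u v : Conf s) : phi e s p (u + v) = phi e s p u + phi e s p v := by
  funext j
  simp [phi, Pi.add_apply, Nat.cast_add, Finset.sum_add_distrib]

lemma phi_toppleAt (hsym : ∀ i j, e i j = e j i) (ht : (graph e).IsTree)
    (hp : IsParent e s p) (i : {i : V // i ≠ s}) (u : Conf s) (hdeg : deg e i.1 ≤ u i) :
    phi e s p (toppleAt e s i u) = phi e s p u := by
  funext j
  have key : ∀ k ∈ descendants e s j,
      ((toppleAt e s i u k : ℕ) : ZMod (e j.1 (p j)))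
        = (u k : ZMod (e j.1 (p j))) - ((deltaRow e s i k : ℤ) : ZMod (e j.1 (p j))) := by
    intro k _
    simp only [toppleAt, deltaRow]
    by_cases hk : k = i
    · rw [if_pos hk, if_pos hk.symm, hk]
      push_cast [hdeg]
      ring
    · rw [if_neg hk, if_neg (fun h => hk h.symm)]
      push_cast
      ring
  rw [phi, phi, Finset.sum_congr rfl key, Finset.sum_sub_distrib]
  have hcast : ∑ k ∈ descendants e s j, ((deltaRow e s i k : ℤ) : ZMod (e j.1 (p j)))
      = ((∑ k ∈ descendants e s j, deltaRow e s i k : ℤ) : ZMod (e j.1 (p j))) := by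
    push_cast; rfl
  rw [hcast, rowSum_zmod hsym ht hp, sub_zero]

lemma phi_reach (hsym : ∀ i j, e i j = e j i) (ht : (graph e).IsTree)
    (hp : IsParent e s p) {u v : Conf s} (h : Relation.ReflTransGen (Topple e s) u v) :
    phi e s p v = phi e s p u := by
  induction h with
  | refl => rfl
  | tail h1 h2 ih =>
    obtain ⟨i, hdeg, rfl⟩ := h2
    rw [phi_toppleAt hsym ht hp i _ hdeg, ih]

end Aux2


theorem stmt_12 (e : V → V → ℕ) (s : V) (hsym : ∀ i j : V, e i j = e j i)
    (htree : (graph e).IsTree)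
    (p : {i : V // i ≠ s} → V) (hp : IsParent e s p)
    (σ : Conf s → Conf s) (hσ : IsStabilization e s σ)
    (eT : Conf s)
    (heT : Recurrent e s σ eT ∧ ∀ u, Recurrent e s σ u → σ (eT + u) = u) :
    (∀ u v : {i : V // i ≠ s} → ℤ, phiZ e s p (u + v) = phiZ e s p u + phiZ e s p v) ∧
    Function.Surjective (phiZ e s p) ∧
    (∀ u : {i : V // i ≠ s} → ℤ, phiZ e s p u = 0 ↔ u ∈ lattice e s) ∧
    (∃ ι : (({i : V // i ≠ s} → ℤ) ⧸ lattice e s) ≃+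
        (∀ j : {i : V // i ≠ s}, ZMod (e j.1 (p j))),
      ∀ u : {i : V // i ≠ s} → ℤ, ι (QuotientAddGroup.mk u) = phiZ e s p u) ∧
    (∀ c : Conf s, phiZ e s p (fun i => (c i : ℤ)) = phi e s p (σ (c + eT))) := by
  obtain ⟨heT1, heT2⟩ := heT
  have hker : ∀ u : {i : V // i ≠ s} → ℤ, phiZ e s p u = 0 ↔ u ∈ lattice e s := by
    intro u
    exact ⟨fun h => ker_le_lattice hsym htree hp h, fun h => lattice_le_ker hsym htree hp h⟩
  have hsurj : Function.Surjective (phiZ e s p) := phiZ_surj htree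
  refine ⟨?_, hsurj, hker, ?_, ?_⟩
  · intro u v
    funext j
    simp [phiZ, Pi.add_apply, Int.cast_add, Finset.sum_add_distrib]
  · -- the isomorphism
    have hlift : ∀ x ∈ lattice e s, phiHom e s p x = 0 := fun x hx => (hker x).mpr hx
    set f := QuotientAddGroup.lift (lattice e s) (phiHom e s p) (fun x hx => (AddMonoidHom.mem_ker).mpr (hlift x hx)) with hf
    have hbij : Function.Bijective f := by
      constructor
      · rw [injective_iff_map_eq_zero]
        intro a
        refine QuotientAddGroup.induction_on a ?_
        intro u hu
        rw [hf, QuotientAddGroup.lift_mk'] at hu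
        exact (QuotientAddGroup.eq_zero_iff u).mpr ((hker u).mp hu)
      · intro t
        obtain ⟨u, hu⟩ := hsurj t
        exact ⟨QuotientAddGroup.mk u, by rw [hf, QuotientAddGroup.lift_mk']; exact hu⟩
    exact ⟨AddEquiv.ofBijective f hbij, fun u => rfl⟩
  · intro c
    rw [phiZ_natCast]
    have h1 : phi e s p (σ (c + eT)) = phi e s p (c + eT) :=
      phi_reach hsym htree hp (hσ (c + eT)).2
    have h2 : phi e s p eT = 0 := by
      have h3 : σ (eT + eT) = eT := heT2 eT heT1
      have h4 : phi e s p (σ (eT + eT)) = phi e s p (eT + eT) :=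
        phi_reach hsym htree hp (hσ (eT + eT)).2
      rw [h3, phi_add] at h4
      exact left_eq_add.mp h4
    rw [h1, phi_add, h2, add_zero]


end SandpilePaper
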